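/- Let (x(t))_{t∈ℕ} be a stochastic process and let B₀, ..., B_{k−1}: X → ℝ be nonnegative functions each satisfying the k-step supermartingale property E[B_i(x(t+k)) | x(t)] ≤ B_i(x(t)) along the process (outside X_u). Then P{∃ t ∈ ℕ: writing t = i + jk with 0 ≤ i < k and j ∈ ℕ, B_i(x(t)) ≥ 1} ≤ ∑_{i=0}^{k−1} E[B_i(x(i))]. -/

import Mathlib

open MeasureTheory

lemma ville_aux {Ω : Type*} {m : MeasurableSpace Ω} {μ : Measure Ω} [IsFiniteMeasure μ]
    {𝒢 : Filtration ℕ m} {f : ℕ → Ω → ℝ}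
    (h : Supermartingale f 𝒢 μ) (hnonneg : ∀ j ω, 0 ≤ f j ω) (n : ℕ) :
    μ {ω | ∃ j ≤ n, 1 ≤ f j ω} ≤ ENNReal.ofReal (∫ ω, f 0 ω ∂μ) := by
  set τ : Ω → WithTop ℕ := fun ω ↦ ((hittingBtwn f (Set.Ici (1 : ℝ)) 0 n ω : ℕ) : WithTop ℕ) with hτdef
  have hτ : IsStoppingTime 𝒢 τ := h.stronglyAdapted.adapted.isStoppingTime_hittingBtwn measurableSet_Ici
  -- optional stopping for supermartingale
  have hsub : Submartingale (-f) 𝒢 μ := h.neg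
  have hOS := hsub.expected_stoppedValue_mono (isStoppingTime_const 𝒢 0) hτ
      (fun ω => WithTop.coe_le_coe.2 (Nat.zero_le _)) (N := n) (fun ω => WithTop.coe_le_coe.2 (hittingBtwn_le (ω := ω)))
  have hSVneg : stoppedValue (-f) τ = -(stoppedValue f τ) := rfl
  have hSVconst : stoppedValue (-f) (fun _ => WithTop.some (0 : ℕ)) = -(f 0) := by
    rw [stoppedValue_const]; rfl
  rw [hSVneg, hSVconst] at hOS
  simp only [Pi.neg_apply, integral_neg, neg_le_neg_iff] at hOS
  -- hOS : ∫ ω, stoppedValue f τ ω ∂μ ≤ μ[f 0]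
  have hintSV : Integrable (stoppedValue f τ) μ := by
    have := hsub.integrable_stoppedValue hτ (N := n) (fun ω => WithTop.coe_le_coe.2 (hittingBtwn_le (ω := ω)))
    rw [hSVneg] at this
    simpa using this.neg
  have hA : MeasurableSet {ω | ∃ j ≤ n, 1 ≤ f j ω} := by
    have : {ω | ∃ j ≤ n, 1 ≤ f j ω} = ⋃ j ∈ Set.Iic n, {ω | 1 ≤ f j ω} := by
      ext ω; simp
    rw [this]
    exact MeasurableSet.biUnion (Set.to_countable _) fun j _ =>
      measurableSet_le measurable_const
        ((h.stronglyMeasurable j).measurable.le (𝒢.le j))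
  have hge : ∀ ω ∈ {ω | ∃ j ≤ n, 1 ≤ f j ω}, (1 : ℝ) ≤ stoppedValue f τ ω := by
    intro ω hω
    obtain ⟨j, hj, hj1⟩ := hω
    exact stoppedValue_hittingBtwn_mem ⟨j, ⟨Nat.zero_le _, hj⟩, hj1⟩
  have h1 := setIntegral_ge_of_const_le hA (measure_ne_top μ _) hge hintSV.integrableOn
  have h2 : ∫ ω in {ω | ∃ j ≤ n, 1 ≤ f j ω}, stoppedValue f τ ω ∂μ ≤ ∫ ω, stoppedValue f τ ω ∂μ :=
    setIntegral_le_integral hintSV (Filter.Eventually.of_forall fun ω => hnonneg _ ω)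
  have key : (μ {ω | ∃ j ≤ n, 1 ≤ f j ω}).toReal ≤ ∫ ω, f 0 ω ∂μ := by
    calc (μ {ω | ∃ j ≤ n, 1 ≤ f j ω}).toReal
        = 1 * (μ {ω | ∃ j ≤ n, 1 ≤ f j ω}).toReal := (one_mul _).symm
      _ ≤ ∫ ω in {ω | ∃ j ≤ n, 1 ≤ f j ω}, stoppedValue f τ ω ∂μ := by
          simpa only [one_mul, smul_eq_mul, mul_one, Measure.real] using h1
      _ ≤ ∫ ω, stoppedValue f τ ω ∂μ := h2
      _ ≤ _ := hOS
  calc μ {ω | ∃ j ≤ n, 1 ≤ f j ω}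
      = ENNReal.ofReal (μ {ω | ∃ j ≤ n, 1 ≤ f j ω}).toReal :=
        (ENNReal.ofReal_toReal (measure_ne_top μ _)).symm
    _ ≤ ENNReal.ofReal (∫ ω, f 0 ω ∂μ) := ENNReal.ofReal_le_ofReal key

lemma ville {Ω : Type*} {m : MeasurableSpace Ω} {μ : Measure Ω} [IsFiniteMeasure μ]
    {𝒢 : Filtration ℕ m} {f : ℕ → Ω → ℝ}
    (h : Supermartingale f 𝒢 μ) (hnonneg : ∀ j ω, 0 ≤ f j ω) :
    μ {ω | ∃ j, 1 ≤ f j ω} ≤ ENNReal.ofReal (∫ ω, f 0 ω ∂μ) := by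
  have heq : {ω | ∃ j, 1 ≤ f j ω} = ⋃ n, {ω | ∃ j ≤ n, 1 ≤ f j ω} := by
    ext ω
    simp only [Set.mem_setOf_eq, Set.mem_iUnion]
    exact ⟨fun ⟨j, hj⟩ => ⟨j, j, le_rfl, hj⟩, fun ⟨n, j, _, hj⟩ => ⟨j, hj⟩⟩
  have hmono : Monotone fun n => {ω | ∃ j ≤ n, 1 ≤ f j ω} := by
    intro a b hab ω ⟨j, hj, h1⟩
    exact ⟨j, hj.trans hab, h1⟩
  rw [heq, hmono.directed_le.measure_iUnion]
  exact iSup_le fun n => ville_aux h hnonneg n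

/-- The core probabilistic estimate behind the k-induction safety theorems: if each
nonnegative `B_i` (`0 ≤ i < k`) satisfies the `k`-step supermartingale property along the
process, then the probability that at some time `t = i + jk` the value `B_i(x(t))` reaches `1`
is at most `∑_{i=0}^{k-1} E[B_i(x(i))]` (Ville's inequality on each residue class plus
Boole's inequality). -/
theorem stmt_16 {Ω : Type*} {m : MeasurableSpace Ω} (μ : Measure Ω) [IsProbabilityMeasure μ]
    {X : Type*} [MeasurableSpace X]
    (k : ℕ) (hk : 1 ≤ k)
    (B : ℕ → X → ℝ) (hBmeas : ∀ i < k, Measurable (B i))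
    (hBnonneg : ∀ i < k, ∀ y, 0 ≤ B i y)
    (x : ℕ → Ω → X) (ℱ : Filtration ℕ m)
    (hadapted : ∀ t, Measurable[ℱ t] (x t))
    (hmeasx : ∀ t, Measurable (x t))
    (hintB : ∀ i < k, ∀ t, Integrable (fun ω => B i (x t ω)) μ)
    -- k-step supermartingale property of each B_i along the process
    (hsuper : ∀ i < k, ∀ t,
      μ[(fun ω => B i (x (t + k) ω))|ℱ t] ≤ᵐ[μ] fun ω => B i (x t ω)) :
    μ {ω | ∃ t : ℕ, 1 ≤ B (t % k) (x t ω)} ≤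
      ENNReal.ofReal (∑ i ∈ Finset.range k, ∫ ω, B i (x i ω) ∂μ) := by
  -- per-residue Ville bound
  have hres : ∀ i < k, μ {ω | ∃ j : ℕ, 1 ≤ B i (x (i + j * k) ω)} ≤
      ENNReal.ofReal (∫ ω, B i (x i ω) ∂μ) := by
    intro i hi
    set G : Filtration ℕ m :=
      { seq := fun j => ℱ (i + j * k)
        mono' := fun a b hab => ℱ.mono (by gcongr)
        le' := fun j => ℱ.le _ } with hG
    set f : ℕ → Ω → ℝ := fun j ω => B i (x (i + j * k) ω) with hf
    have hS : Supermartingale f G μ := by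
      refine supermartingale_nat (fun j => ?_) (fun j => hintB i hi _) (fun j => ?_)
      · exact ((hBmeas i hi).comp (hadapted (i + j * k))).stronglyMeasurable
      · have := hsuper i hi (i + j * k)
        have he : i + (j + 1) * k = i + j * k + k := by ring
        simp only [hf, he]
        exact this
    have := ville hS (fun j ω => hBnonneg i hi _)
    simp only [hf, Nat.zero_mul, Nat.add_zero] at this
    exact this
  -- event decomposition
  have hsub : {ω | ∃ t : ℕ, 1 ≤ B (t % k) (x t ω)} ⊆
      ⋃ i ∈ Finset.range k, {ω | ∃ j : ℕ, 1 ≤ B i (x (i + j * k) ω)} := by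
    intro ω ⟨t, ht⟩
    refine Set.mem_biUnion (Finset.mem_range.2 (Nat.mod_lt t hk)) ?_
    refine ⟨t / k, ?_⟩
    rw [Nat.mod_add_div']
    exact ht
  calc μ {ω | ∃ t : ℕ, 1 ≤ B (t % k) (x t ω)}
      ≤ μ (⋃ i ∈ Finset.range k, {ω | ∃ j : ℕ, 1 ≤ B i (x (i + j * k) ω)}) :=
        measure_mono hsub
    _ ≤ ∑ i ∈ Finset.range k, μ {ω | ∃ j : ℕ, 1 ≤ B i (x (i + j * k) ω)} :=
        measure_biUnion_finset_le _ _
    _ ≤ ∑ i ∈ Finset.range k, ENNReal.ofReal (∫ ω, B i (x i ω) ∂μ) :=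
        Finset.sum_le_sum fun i hi => hres i (Finset.mem_range.1 hi)
    _ = ENNReal.ofReal (∑ i ∈ Finset.range k, ∫ ω, B i (x i ω) ∂μ) :=
        (ENNReal.ofReal_sum_of_nonneg fun i hi =>
          integral_nonneg fun ω => hBnonneg i (Finset.mem_range.1 hi) _).symm
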